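/- Let G be a connected graph on n vertices with normalized Laplacian L̃ = I − D^{−1/2} A D^{−1/2}, let λ be the second smallest eigenvalue of L̃, and let φ be the conductance of G. Then 2φ ≥ λ ≥ φ²/2. -/

import Mathlib

open Finset Matrix

lemma sq_sum_aux (aa x y : ℝ) (ha : 0 ≤ aa) :
    aa * (x + y)^2 ≤ 2 * (aa * (x * x)) + 2 * (aa * (y * y)) := by
  nlinarith [sq_nonneg (x - y)]

lemma cut_expand {n : ℕ} (a : Fin n → Fin n → ℝ) (S : Finset (Fin n)) :
    (∑ u, ∑ v, a u v * (if u ∈ S ∧ v ∉ S then (1:ℝ) else 0))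
      = ∑ u ∈ S, ∑ v ∈ Sᶜ, a u v := by
  have inner1 : ∀ u, (∑ v, a u v * (if u ∈ S ∧ v ∉ S then (1:ℝ) else 0))
      = if u ∈ S then ∑ v ∈ Sᶜ, a u v else 0 := by
    intro u
    by_cases hu : u ∈ S
    · rw [if_pos hu]
      have e : ∀ v, a u v * (if u ∈ S ∧ v ∉ S then (1:ℝ) else 0)
          = if v ∈ Sᶜ then a u v else 0 := by
        intro v
        by_cases hv : v ∈ S
        · rw [if_neg (fun hc => hc.2 hv), mul_zero, if_neg (by simpa using hv)]
        · rw [if_pos ⟨hu, hv⟩, mul_one, if_pos (by simpa using hv)]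
      rw [Finset.sum_congr rfl (fun v _ => e v), Finset.sum_ite_mem, Finset.univ_inter]
    · rw [if_neg hu]
      apply Finset.sum_eq_zero
      intro v _
      rw [if_neg (fun hc => hu hc.1), mul_zero]
  rw [Finset.sum_congr rfl (fun u _ => inner1 u), Finset.sum_ite_mem, Finset.univ_inter]

lemma cheeger_sweep {n : ℕ} (d : Fin n → ℝ) (a : Fin n → Fin n → ℝ)
    (hsymm : ∀ u v, a u v = a v u)
    (h : Fin n → ℝ) (hh : ∀ v, 0 ≤ h v) (hzero : ∃ v, h v = 0)
    (φ : ℝ)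
    (hS : ∀ S : Finset (Fin n), S.Nonempty → (∀ v ∈ S, 0 < h v) →
      φ * (∑ v ∈ S, d v) ≤ ∑ u ∈ S, ∑ v ∈ Sᶜ, a u v) :
    φ * (∑ v, d v * h v ^ 2) ≤ (1/2) * ∑ u, ∑ v, a u v * |h u ^ 2 - h v ^ 2| := by
  rcases Nat.eq_zero_or_pos n with h0 | hpos
  · subst h0; simp
  obtain ⟨v₀, hv₀⟩ := hzero
  set τ := Tuple.sort (fun i => -h i) with hτ
  have hmono : Monotone ((fun i => -h i) ∘ τ) := Tuple.monotone_sort _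
  set p : Fin n → ℕ := fun v => ((τ.symm v : Fin n) : ℕ) with hp
  have hpinj : Function.Injective p := by
    intro u v huv
    have h1 : τ.symm u = τ.symm v := Fin.val_injective huv
    have := congrArg τ h1
    simpa using this
  have hplt : ∀ v, p v < n := fun v => (τ.symm v).isLt
  have hptau : ∀ k : Fin n, p (τ k) = (k : ℕ) := by intro k; simp [hp]
  have hanti : ∀ {k l : Fin n}, k ≤ l → h (τ l) ≤ h (τ k) := by
    intro k l hkl
    have := hmono hkl
    simpa using this
  set t : ℕ → ℝ := fun k => ∑ v, if p v = k then h v ^ 2 else 0 with ht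
  have htval : ∀ v, t (p v) = h v ^ 2 := by
    intro v
    show (∑ u : Fin n, if p u = p v then h u ^ 2 else 0) = h v ^ 2
    rw [Finset.sum_eq_single v]
    · simp
    · intro u _ huv
      rw [if_neg (fun hc => huv (hpinj hc))]
    · intro hv; exact absurd (Finset.mem_univ v) hv
  have httau : ∀ k : Fin n, t (k : ℕ) = h (τ k) ^ 2 := by
    intro k
    have := htval (τ k)
    rwa [hptau] at this
  have htnonneg : ∀ k, 0 ≤ t k := by
    intro k
    apply Finset.sum_nonneg
    intro v _
    split
    · positivity
    · exact le_refl 0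
  have htanti : ∀ {k l : ℕ}, k ≤ l → l < n → t l ≤ t k := by
    intro k l hkl hl
    have hk : k < n := lt_of_le_of_lt hkl hl
    have e1 : t k = h (τ ⟨k, hk⟩) ^ 2 := httau ⟨k, hk⟩
    have e2 : t l = h (τ ⟨l, hl⟩) ^ 2 := httau ⟨l, hl⟩
    rw [e1, e2]
    have hle : h (τ ⟨l, hl⟩) ≤ h (τ ⟨k, hk⟩) := hanti (by exact hkl)
    exact pow_le_pow_left₀ (hh _) hle 2
  have htlast : t (n - 1) = 0 := by
    have h1 : p v₀ ≤ n - 1 := Nat.le_sub_one_of_lt (hplt v₀)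
    have h2 : n - 1 < n := Nat.sub_lt hpos one_pos
    have h3 := htanti h1 h2
    have h4 := htval v₀
    rw [hv₀] at h4
    have h5 := htnonneg (n - 1)
    nlinarith
  set T : ℕ → Finset (Fin n) := fun k => Finset.univ.filter (fun v => p v ≤ k) with hT
  have hmemT : ∀ k v, v ∈ T k ↔ p v ≤ k := by intro k v; simp [hT]
  set Δ : ℕ → ℝ := fun k => t k - t (k + 1) with hΔ
  have telesc : ∀ {i j : ℕ}, i ≤ j → ∑ k ∈ Finset.Ico i j, Δ k = t i - t j := by
    intro i j hij
    rw [Finset.sum_Ico_eq_sub _ hij, Finset.sum_range_sub' t, Finset.sum_range_sub' t]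
    ring
  have pair' : ∀ u v : Fin n, p u < p v →
      |h u ^ 2 - h v ^ 2| = ∑ k ∈ Finset.range (n - 1),
        Δ k * ((if u ∈ T k ∧ v ∉ T k then (1:ℝ) else 0)
          + (if v ∈ T k ∧ u ∉ T k then (1:ℝ) else 0)) := by
    intro u v huv
    have hsecond : ∀ k, (if v ∈ T k ∧ u ∉ T k then (1:ℝ) else 0) = 0 := by
      intro k
      rw [if_neg]
      rintro ⟨h1, h2⟩
      rw [hmemT] at h1 h2
      omega
    have hfirst : ∀ k, (if u ∈ T k ∧ v ∉ T k then (1:ℝ) else 0)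
        = if k ∈ Finset.Ico (p u) (p v) then 1 else 0 := by
      intro k
      by_cases hc : p u ≤ k ∧ k < p v
      · rw [if_pos, if_pos (Finset.mem_Ico.mpr hc)]
        refine ⟨(hmemT k u).mpr hc.1, fun hv => ?_⟩
        rw [hmemT] at hv
        omega
      · rw [if_neg, if_neg (fun hm => hc (Finset.mem_Ico.mp hm))]
        rintro ⟨h1, h2⟩
        rw [hmemT] at h1 h2
        exact hc ⟨h1, by omega⟩
    have hord : t (p v) ≤ t (p u) := htanti (le_of_lt huv) (hplt v)
    have key : ∑ k ∈ Finset.range (n - 1),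
        Δ k * ((if u ∈ T k ∧ v ∉ T k then (1:ℝ) else 0)
          + (if v ∈ T k ∧ u ∉ T k then (1:ℝ) else 0)) = t (p u) - t (p v) := by
      simp only [hsecond, hfirst, add_zero]
      rw [Finset.sum_congr rfl (fun k _ => by rw [mul_ite, mul_one, mul_zero])]
      rw [Finset.sum_ite_mem]
      rw [Finset.inter_eq_right.mpr]
      · exact telesc (le_of_lt huv)
      · intro k hk
        rw [Finset.mem_Ico] at hk
        have := hplt v
        exact Finset.mem_range.mpr (by omega)
    rw [← htval u, ← htval v, abs_of_nonneg (sub_nonneg.mpr hord)]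
    exact key.symm
  have pair : ∀ u v : Fin n,
      |h u ^ 2 - h v ^ 2| = ∑ k ∈ Finset.range (n - 1),
        Δ k * ((if u ∈ T k ∧ v ∉ T k then (1:ℝ) else 0)
          + (if v ∈ T k ∧ u ∉ T k then (1:ℝ) else 0)) := by
    intro u v
    rcases lt_trichotomy (p u) (p v) with hc | hc | hc
    · exact pair' u v hc
    · have huv : u = v := hpinj hc
      subst huv
      simp
    · rw [abs_sub_comm, pair' v u hc]
      exact Finset.sum_congr rfl (fun k _ => by ring)
  have cutT : ∀ k, (∑ u, ∑ v, a u v * (if u ∈ T k ∧ v ∉ T k then (1:ℝ) else 0))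
      = ∑ u ∈ T k, ∑ v ∈ (T k)ᶜ, a u v := by
    intro k
    have inner1 : ∀ u, (∑ v, a u v * (if u ∈ T k ∧ v ∉ T k then (1:ℝ) else 0))
        = if u ∈ T k then ∑ v ∈ (T k)ᶜ, a u v else 0 := by
      intro u
      by_cases hu : u ∈ T k
      · rw [if_pos hu]
        have e : ∀ v, a u v * (if u ∈ T k ∧ v ∉ T k then (1:ℝ) else 0)
            = if v ∈ (T k)ᶜ then a u v else 0 := by
          intro v
          by_cases hv : v ∈ T k
          · rw [if_neg (fun hc => hc.2 hv), mul_zero, if_neg (by simpa using hv)]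
          · rw [if_pos ⟨hu, hv⟩, mul_one, if_pos (by simpa using hv)]
        rw [Finset.sum_congr rfl (fun v _ => e v), Finset.sum_ite_mem, Finset.univ_inter]
      · rw [if_neg hu]
        apply Finset.sum_eq_zero
        intro v _
        rw [if_neg (fun hc => hu hc.1), mul_zero]
    rw [Finset.sum_congr rfl (fun u _ => inner1 u), Finset.sum_ite_mem, Finset.univ_inter]
  have swap : (∑ u, ∑ v, a u v * |h u ^ 2 - h v ^ 2|)
      = 2 * ∑ k ∈ Finset.range (n - 1), Δ k * (∑ u ∈ T k, ∑ v ∈ (T k)ᶜ, a u v) := by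
    have step1 : (∑ u, ∑ v, a u v * |h u ^ 2 - h v ^ 2|)
        = ∑ k ∈ Finset.range (n - 1), ∑ u, ∑ v,
            (Δ k * (a u v * ((if u ∈ T k ∧ v ∉ T k then (1:ℝ) else 0)
              + (if v ∈ T k ∧ u ∉ T k then (1:ℝ) else 0)))) := by
      have e3 : (∑ u, ∑ v, a u v * |h u ^ 2 - h v ^ 2|)
          = ∑ u, ∑ v, ∑ k ∈ Finset.range (n - 1),
            (Δ k * (a u v * ((if u ∈ T k ∧ v ∉ T k then (1:ℝ) else 0)
              + (if v ∈ T k ∧ u ∉ T k then (1:ℝ) else 0)))) := by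
        apply Finset.sum_congr rfl
        intro u _
        apply Finset.sum_congr rfl
        intro v _
        rw [pair u v, Finset.mul_sum]
        apply Finset.sum_congr rfl
        intro k _
        ring
      rw [e3]
      rw [show (∑ u, ∑ v, ∑ k ∈ Finset.range (n - 1),
            (Δ k * (a u v * ((if u ∈ T k ∧ v ∉ T k then (1:ℝ) else 0)
              + (if v ∈ T k ∧ u ∉ T k then (1:ℝ) else 0)))))
          = ∑ u, ∑ k ∈ Finset.range (n - 1), ∑ v,
            (Δ k * (a u v * ((if u ∈ T k ∧ v ∉ T k then (1:ℝ) else 0)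
              + (if v ∈ T k ∧ u ∉ T k then (1:ℝ) else 0))))
          from Finset.sum_congr rfl (fun u _ => Finset.sum_comm)]
      exact Finset.sum_comm
    have step2 : ∀ k, (∑ u, ∑ v,
            (Δ k * (a u v * ((if u ∈ T k ∧ v ∉ T k then (1:ℝ) else 0)
              + (if v ∈ T k ∧ u ∉ T k then (1:ℝ) else 0)))))
        = 2 * (Δ k * (∑ u ∈ T k, ∑ v ∈ (T k)ᶜ, a u v)) := by
      intro k
      have e1 : (∑ u, ∑ v, a u v * (if v ∈ T k ∧ u ∉ T k then (1:ℝ) else 0))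
          = ∑ u, ∑ v, a u v * (if u ∈ T k ∧ v ∉ T k then (1:ℝ) else 0) := by
        rw [Finset.sum_comm]
        apply Finset.sum_congr rfl
        intro u _
        apply Finset.sum_congr rfl
        intro v _
        rw [hsymm v u]
      calc (∑ u, ∑ v,
            (Δ k * (a u v * ((if u ∈ T k ∧ v ∉ T k then (1:ℝ) else 0)
              + (if v ∈ T k ∧ u ∉ T k then (1:ℝ) else 0)))))
          = ∑ u, ∑ v, (Δ k * (a u v * (if u ∈ T k ∧ v ∉ T k then (1:ℝ) else 0))
              + Δ k * (a u v * (if v ∈ T k ∧ u ∉ T k then (1:ℝ) else 0))) := by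
            apply Finset.sum_congr rfl; intro u _
            apply Finset.sum_congr rfl; intro v _
            ring
        _ = Δ k * (∑ u, ∑ v, a u v * (if u ∈ T k ∧ v ∉ T k then (1:ℝ) else 0))
              + Δ k * (∑ u, ∑ v, a u v * (if v ∈ T k ∧ u ∉ T k then (1:ℝ) else 0)) := by
            simp only [Finset.sum_add_distrib, Finset.mul_sum]
        _ = 2 * (Δ k * (∑ u ∈ T k, ∑ v ∈ (T k)ᶜ, a u v)) := by
            rw [e1, cutT]; ring
    rw [step1, Finset.sum_congr rfl (fun k _ => step2 k), ← Finset.mul_sum]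
  have hΔnonneg : ∀ k ∈ Finset.range (n - 1), 0 ≤ Δ k := by
    intro k hk
    rw [Finset.mem_range] at hk
    exact sub_nonneg.mpr (htanti (Nat.le_succ k) (by omega))
  have abel : ∑ k ∈ Finset.range (n - 1), Δ k * (∑ v ∈ T k, d v) = ∑ v, d v * h v ^ 2 := by
    have volT : ∀ k, (∑ v ∈ T k, d v) = ∑ v, (if v ∈ T k then d v else 0) := by
      intro k; rw [Finset.sum_ite_mem, Finset.univ_inter]
    calc ∑ k ∈ Finset.range (n - 1), Δ k * (∑ v ∈ T k, d v)
        = ∑ k ∈ Finset.range (n - 1), ∑ v, (if v ∈ T k then Δ k * d v else 0) := by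
          apply Finset.sum_congr rfl; intro k _
          rw [volT, Finset.mul_sum]
          apply Finset.sum_congr rfl; intro v _
          rw [mul_ite, mul_zero]
      _ = ∑ v, ∑ k ∈ Finset.range (n - 1), (if v ∈ T k then Δ k * d v else 0) :=
          Finset.sum_comm
      _ = ∑ v, d v * h v ^ 2 := by
          apply Finset.sum_congr rfl; intro v _
          have e : ∀ k ∈ Finset.range (n - 1), (if v ∈ T k then Δ k * d v else 0)
              = if k ∈ Finset.Ico (p v) (n - 1) then Δ k * d v else 0 := by
            intro k hk
            rw [Finset.mem_range] at hk
            by_cases hc : p v ≤ k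
            · rw [if_pos ((hmemT k v).mpr hc), if_pos (Finset.mem_Ico.mpr ⟨hc, hk⟩)]
            · rw [if_neg (fun hm => hc ((hmemT k v).mp hm)),
                if_neg (fun hm => hc (Finset.mem_Ico.mp hm).1)]
          rw [Finset.sum_congr rfl e, Finset.sum_ite_mem,
            Finset.inter_eq_right.mpr (fun k hk => Finset.mem_range.mpr (Finset.mem_Ico.mp hk).2),
            ← Finset.sum_mul, telesc (Nat.le_sub_one_of_lt (hplt v)), htlast, htval]
          ring
  have bound : ∀ k ∈ Finset.range (n - 1),
      φ * (Δ k * (∑ v ∈ T k, d v)) ≤ Δ k * (∑ u ∈ T k, ∑ v ∈ (T k)ᶜ, a u v) := by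
    intro k hk
    have hkn : k < n := by rw [Finset.mem_range] at hk; omega
    rcases eq_or_lt_of_le (htnonneg k) with hzeroK | hposK
    · have hΔ0 : Δ k = 0 := by
        have h1 : t (k + 1) ≤ t k :=
          htanti (Nat.le_succ k) (by rw [Finset.mem_range] at hk; omega)
        have h2 := htnonneg (k + 1)
        have h3 : t k = 0 := hzeroK.symm
        simp only [hΔ]
        linarith
      rw [hΔ0]; simp
    · have hTpos : ∀ v ∈ T k, 0 < h v := by
        intro v hv
        rw [hmemT] at hv
        have h1 : t k ≤ t (p v) := htanti hv hkn
        have h2 := htval v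
        nlinarith [hh v]
      have hne : (T k).Nonempty := ⟨τ ⟨0, hpos⟩, by rw [hmemT, hptau]; exact Nat.zero_le k⟩
      have h3 := hS (T k) hne hTpos
      have h4 := hΔnonneg k hk
      calc φ * (Δ k * (∑ v ∈ T k, d v)) = Δ k * (φ * (∑ v ∈ T k, d v)) := by ring
        _ ≤ Δ k * (∑ u ∈ T k, ∑ v ∈ (T k)ᶜ, a u v) := mul_le_mul_of_nonneg_left h3 h4
  calc φ * (∑ v, d v * h v ^ 2)
      = ∑ k ∈ Finset.range (n - 1), φ * (Δ k * (∑ v ∈ T k, d v)) := by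
        rw [← Finset.mul_sum, abel]
    _ ≤ ∑ k ∈ Finset.range (n - 1), Δ k * (∑ u ∈ T k, ∑ v ∈ (T k)ᶜ, a u v) :=
        Finset.sum_le_sum bound
    _ = (1/2) * ∑ u, ∑ v, a u v * |h u ^ 2 - h v ^ 2| := by rw [swap]; ring

lemma rayleigh_facts {n : ℕ} (hn : 1 < n) (M : Matrix (Fin n) (Fin n) ℝ) (hM : M.IsHermitian)
    (hpsd : ∀ x : Fin n → ℝ, 0 ≤ x ⬝ᵥ (M *ᵥ x))
    (w : Fin n → ℝ) (hw : w ≠ 0) (hMw : M *ᵥ w = 0)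
    (hker : ∀ x : Fin n → ℝ, M *ᵥ x = 0 → ∃ c : ℝ, x = c • w)
    (lam : ℝ) (hlam : lam = hM.eigenvalues (Tuple.sort hM.eigenvalues ⟨1, hn⟩)) :
    0 ≤ lam ∧
    (∀ x : Fin n → ℝ, w ⬝ᵥ x = 0 → lam * (x ⬝ᵥ x) ≤ x ⬝ᵥ (M *ᵥ x)) ∧
    (∃ f : Fin n → ℝ, f ≠ 0 ∧ M *ᵥ f = lam • f ∧ w ⬝ᵥ f = 0) := by
  classical
  set μ := hM.eigenvalues with hμ
  set σ := Tuple.sort μ with hσ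
  set V : Fin n → (Fin n → ℝ) := fun i => ⇑(hM.eigenvectorBasis i) with hV
  have hMV : ∀ i, M *ᵥ V i = μ i • V i := fun i => hM.mulVec_eigenvectorBasis i
  have horth : ∀ i j, V i ⬝ᵥ V j = if i = j then 1 else 0 := by
    intro i j
    have := (orthonormal_iff_ite.mp hM.eigenvectorBasis.orthonormal) i j
    rw [PiLp.inner_apply] at this
    simpa [RCLike.inner_apply, dotProduct, mul_comm] using this
  have hpsd' : M.PosSemidef := Matrix.PosSemidef.of_dotProduct_mulVec_nonneg hM (fun x => by simpa using hpsd x)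
  have hμnonneg : ∀ i, 0 ≤ μ i := fun i => hpsd'.eigenvalues_nonneg i
  have hσmono : Monotone (μ ∘ σ) := Tuple.monotone_sort μ
  have hzero : ∃ i, μ i = 0 := by
    by_contra hc
    push_neg at hc
    have hdet : M.det ≠ 0 := by
      rw [hM.det_eq_prod_eigenvalues]
      exact Finset.prod_ne_zero_iff.mpr (fun i _ => by simpa using hc i)
    exact hw (Matrix.eq_zero_of_mulVec_eq_zero hdet hMw)
  have hpos_n : 0 < n := lt_trans zero_lt_one hn
  have hmin : μ (σ ⟨0, hpos_n⟩) = 0 := by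
    obtain ⟨i₀, hi₀⟩ := hzero
    refine le_antisymm ?_ (hμnonneg _)
    have h1 : (⟨0, hpos_n⟩ : Fin n) ≤ σ.symm i₀ := by
      rw [Fin.le_def]; exact Nat.zero_le _
    have := hσmono h1
    simpa [hi₀] using this
  have hVσ0 : M *ᵥ V (σ ⟨0, hpos_n⟩) = 0 := by
    rw [hMV, hmin, zero_smul]
  obtain ⟨c₀, hc₀⟩ := hker _ hVσ0
  have hc₀ne : c₀ ≠ 0 := by
    intro hc
    have h1 := horth (σ ⟨0, hpos_n⟩) (σ ⟨0, hpos_n⟩)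
    rw [hc₀, hc, zero_smul] at h1
    simp at h1
  have hwdot : ∀ x : Fin n → ℝ, w ⬝ᵥ x = 0 → V (σ ⟨0, hpos_n⟩) ⬝ᵥ x = 0 := by
    intro x hx
    rw [hc₀, smul_dotProduct, hx, smul_zero]
  have hlam_le : ∀ i, i ≠ σ ⟨0, hpos_n⟩ → lam ≤ μ i := by
    intro i hi
    have h1 : (⟨1, hn⟩ : Fin n) ≤ σ.symm i := by
      have h2 : σ.symm i ≠ ⟨0, hpos_n⟩ := fun hc => hi (by rw [← hc]; simp)
      have h3 : ((σ.symm i : Fin n) : ℕ) ≠ 0 := fun hc => h2 (Fin.ext (by simpa using hc))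
      rw [Fin.le_def]
      simpa using Nat.one_le_iff_ne_zero.mpr h3
    have := hσmono h1
    simpa [hlam] using this
  have hlam0 : 0 ≤ lam := by rw [hlam]; exact hμnonneg _
  set U : Matrix (Fin n) (Fin n) ℝ := (hM.eigenvectorUnitary : Matrix (Fin n) (Fin n) ℝ) with hU
  have hUentry : ∀ i j, U i j = V j i := fun i j => rfl
  have hc_eq : ∀ (x : Fin n → ℝ) (j : Fin n), (Uᵀ *ᵥ x) j = V j ⬝ᵥ x := by
    intro x j
    simp [Matrix.mulVec, dotProduct, hUentry, Matrix.transpose_apply]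
  have hUUT : U * Uᵀ = 1 := by
    have h1 := (Matrix.mem_unitaryGroup_iff).mp hM.eigenvectorUnitary.2
    rw [Matrix.star_eq_conjTranspose, Matrix.conjTranspose_eq_transpose_of_trivial] at h1
    exact h1
  have hspec' : M = U * Matrix.diagonal μ * Uᵀ := by
    have h1 := hM.spectral_theorem
    rw [Unitary.conjStarAlgAut_apply, Matrix.star_eq_conjTranspose, Matrix.conjTranspose_eq_transpose_of_trivial] at h1
    simpa using h1
  refine ⟨hlam0, ?_, ?_⟩
  · intro x hx
    set c : Fin n → ℝ := Uᵀ *ᵥ x with hcdef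
    have hid1 : x ⬝ᵥ x = ∑ j, c j ^ 2 := by
      calc x ⬝ᵥ x = x ⬝ᵥ ((U * Uᵀ) *ᵥ x) := by rw [hUUT, Matrix.one_mulVec]
        _ = x ⬝ᵥ (U *ᵥ (Uᵀ *ᵥ x)) := by rw [Matrix.mulVec_mulVec]
        _ = (x ᵥ* U) ⬝ᵥ (Uᵀ *ᵥ x) := Matrix.dotProduct_mulVec _ _ _
        _ = c ⬝ᵥ c := by rw [← Matrix.mulVec_transpose]
        _ = ∑ j, c j ^ 2 := by simp [dotProduct, pow_two]
    have hid2 : x ⬝ᵥ (M *ᵥ x) = ∑ j, μ j * c j ^ 2 := by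
      calc x ⬝ᵥ (M *ᵥ x) = x ⬝ᵥ (U *ᵥ (Matrix.diagonal μ *ᵥ (Uᵀ *ᵥ x))) := by
            conv_lhs => rw [hspec']
            rw [Matrix.mulVec_mulVec, Matrix.mulVec_mulVec]
        _ = (x ᵥ* U) ⬝ᵥ (Matrix.diagonal μ *ᵥ c) := Matrix.dotProduct_mulVec _ _ _
        _ = c ⬝ᵥ (Matrix.diagonal μ *ᵥ c) := by rw [← Matrix.mulVec_transpose]
        _ = ∑ j, μ j * c j ^ 2 := by
            simp only [dotProduct, Matrix.mulVec_diagonal]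
            exact Finset.sum_congr rfl (fun j _ => by ring)
    have hcσ0 : c (σ ⟨0, hpos_n⟩) = 0 := by
      rw [hcdef, hc_eq x]
      exact hwdot x hx
    rw [hid1, hid2, Finset.mul_sum]
    apply Finset.sum_le_sum
    intro i _
    by_cases hi : i = σ ⟨0, hpos_n⟩
    · subst hi
      rw [hcσ0]
      simp
    · exact mul_le_mul_of_nonneg_right (hlam_le i hi) (sq_nonneg _)
  · refine ⟨V (σ ⟨1, hn⟩), ?_, ?_, ?_⟩
    · intro hc
      have h1 := horth (σ ⟨1, hn⟩) (σ ⟨1, hn⟩)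
      rw [hc] at h1
      simp at h1
    · rw [hMV, hlam]
    · have hne : σ ⟨0, hpos_n⟩ ≠ σ ⟨1, hn⟩ := by
        intro hc
        have := σ.injective hc
        simp at this
      have h1 := horth (σ ⟨0, hpos_n⟩) (σ ⟨1, hn⟩)
      rw [if_neg hne, hc₀, smul_dotProduct] at h1
      exact (smul_eq_zero.mp h1).resolve_left hc₀ne

set_option maxHeartbeats 4000000 in
/-- Cheeger's inequality: for a connected graph `G` with normalized Laplacian
`L̃ = I − D^{-1/2} A D^{-1/2}`, second smallest eigenvalue `λ`, and conductance `φ`,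
one has `2φ ≥ λ ≥ φ²/2`. -/
theorem cheeger_inequality (n : ℕ) (hn : 1 < n) (G : SimpleGraph (Fin n))
    [DecidableRel G.Adj] (hconn : G.Connected) (hdeg : ∀ v, 0 < G.degree v)
    (nL : Matrix (Fin n) (Fin n) ℝ)
    (hnL : nL = Matrix.of fun i j =>
      if i = j then 1
      else if G.Adj i j then -(1 / Real.sqrt ((G.degree i : ℝ) * (G.degree j : ℝ)))
      else 0)
    (hsym : nL.IsHermitian)
    (lam : ℝ)
    (hlam : lam = hsym.eigenvalues (Tuple.sort hsym.eigenvalues ⟨1, hn⟩))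
    (φ : ℝ)
    (hφ : φ = sInf {x : ℝ | ∃ S : Finset (Fin n), S.Nonempty ∧
      (∑ v ∈ S, (G.degree v : ℝ)) ≤ (∑ v : Fin n, (G.degree v : ℝ)) / 2 ∧
      x = (∑ u ∈ S, ∑ v ∈ Sᶜ, if G.Adj u v then (1 : ℝ) else 0) /
        (∑ v ∈ S, (G.degree v : ℝ))}) :
    2 * φ ≥ lam ∧ lam ≥ φ^2 / 2 := by
  classical
  have hn0 : 0 < n := by omega
  set d : Fin n → ℝ := fun v => (G.degree v : ℝ) with hd
  have hdpos : ∀ v, (0:ℝ) < d v := fun v => by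
    simp only [hd]
    exact_mod_cast hdeg v
  set a : Fin n → Fin n → ℝ := fun u v => if G.Adj u v then 1 else 0 with ha
  have hasymm : ∀ u v, a u v = a v u := by
    intro u v
    simp only [ha]
    by_cases h : G.Adj u v
    · rw [if_pos h, if_pos h.symm]
    · rw [if_neg h, if_neg (fun hc => h hc.symm)]
  have hann : ∀ u v, 0 ≤ a u v := by
    intro u v; simp only [ha]; split <;> norm_num
  have haa : ∀ v, a v v = 0 := by
    intro v; simp [ha]
  have hrow : ∀ v, ∑ u, a v u = d v := by
    intro v
    simp only [ha, hd]
    rw [Finset.sum_boole, ← SimpleGraph.neighborFinset_eq_filter,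
      SimpleGraph.card_neighborFinset_eq_degree]
  have hcol : ∀ v, ∑ u, a u v = d v := by
    intro v
    rw [Finset.sum_congr rfl (fun u _ => hasymm u v)]
    exact hrow v
  set w : Fin n → ℝ := fun v => Real.sqrt (d v) with hw
  have hwpos : ∀ v, 0 < w v := fun v => Real.sqrt_pos.mpr (hdpos v)
  have hw2 : ∀ v, w v ^ 2 = d v := fun v => Real.sq_sqrt (le_of_lt (hdpos v))
  have hwne : w ≠ 0 := by
    intro hc
    exact absurd (congrFun hc ⟨0, hn0⟩) (ne_of_gt (hwpos _))
  have hentry : ∀ i j, nL i j = (if i = j then 1 else 0) - a i j / (w i * w j) := by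
    intro i j
    rw [hnL]
    by_cases hij : i = j
    · subst hij
      simp [ha, Matrix.of_apply, SimpleGraph.irrefl]
    · by_cases hadj : G.Adj i j
      · simp only [Matrix.of_apply, if_neg hij, if_pos hadj, ha]
        rw [show (G.degree i : ℝ) * (G.degree j : ℝ) = d i * d j from rfl,
          Real.sqrt_mul (le_of_lt (hdpos i))]
        ring
      · simp [Matrix.of_apply, hij, hadj, ha]
  -- quadratic form
  have quadform : ∀ x : Fin n → ℝ, x ⬝ᵥ (nL *ᵥ x)
      = (1/2) * ∑ u, ∑ v, a u v * (x u / w u - x v / w v)^2 := by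
    intro x
    have lhs_eq : x ⬝ᵥ (nL *ᵥ x)
        = (∑ v, x v ^ 2) - ∑ u, ∑ v, a u v * (x u * x v) / (w u * w v) := by
      calc x ⬝ᵥ (nL *ᵥ x) = ∑ u, ∑ v, x u * (nL u v * x v) := by
            simp [dotProduct, Matrix.mulVec, Finset.mul_sum]
        _ = ∑ u, ∑ v, ((if u = v then x u * x v else 0)
              - a u v * (x u * x v) / (w u * w v)) := by
            apply Finset.sum_congr rfl; intro u _
            apply Finset.sum_congr rfl; intro v _
            rw [hentry]
            by_cases huv : u = v
            · rw [if_pos huv, if_pos huv]; ring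
            · rw [if_neg huv, if_neg huv]; ring
        _ = (∑ v, x v ^ 2) - ∑ u, ∑ v, a u v * (x u * x v) / (w u * w v) := by
            simp only [Finset.sum_sub_distrib]
            congr 1
            apply Finset.sum_congr rfl; intro u _
            rw [Finset.sum_ite_eq univ u (fun v => x u * x v), if_pos (Finset.mem_univ u)]
            ring
    have hterm : ∀ u, d u * (x u / w u)^2 = x u ^ 2 := by
      intro u
      rw [← hw2 u, div_pow]
      have hne : w u ≠ 0 := ne_of_gt (hwpos u)
      field_simp
    have T1 : ∑ u, ∑ v, a u v * (x u / w u)^2 = ∑ u, x u ^ 2 := by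
      apply Finset.sum_congr rfl
      intro u _
      rw [← Finset.sum_mul, hrow, hterm]
    have T2 : ∑ u, ∑ v, a u v * (x v / w v)^2 = ∑ v, x v ^ 2 := by
      rw [Finset.sum_comm]
      apply Finset.sum_congr rfl
      intro v _
      rw [← Finset.sum_mul, hcol, hterm]
    rw [lhs_eq]
    calc (∑ v, x v ^ 2) - ∑ u, ∑ v, a u v * (x u * x v) / (w u * w v)
        = (1/2) * ((∑ u, ∑ v, a u v * (x u / w u)^2) + (∑ u, ∑ v, a u v * (x v / w v)^2)
            - 2 * ∑ u, ∑ v, a u v * (x u * x v) / (w u * w v)) := by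
          rw [T1, T2]
          ring
      _ = (1/2) * ∑ u, ∑ v, a u v * (x u / w u - x v / w v)^2 := by
          have e1 : ∑ u, ∑ v, a u v * (x u / w u - x v / w v)^2
              = ∑ u, ∑ v, (a u v * (x u / w u)^2 + a u v * (x v / w v)^2
                - 2 * (a u v * (x u * x v) / (w u * w v))) := by
            apply Finset.sum_congr rfl; intro u _
            apply Finset.sum_congr rfl; intro v _
            ring
          rw [e1]
          simp only [Finset.sum_add_distrib, Finset.sum_sub_distrib, ← Finset.mul_sum]
  -- nL *ᵥ w = 0
  have hLw : nL *ᵥ w = 0 := by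
    funext v
    have e1 : (nL *ᵥ w) v = ∑ u, ((if v = u then w u else 0) - a v u / w v) := by
      simp only [Matrix.mulVec, dotProduct]
      apply Finset.sum_congr rfl
      intro u _
      rw [hentry]
      by_cases hvu : v = u
      · rw [if_pos hvu, if_pos hvu]
        subst hvu
        rw [haa]
        ring
      · rw [if_neg hvu, if_neg hvu]
        have hwu : w u ≠ 0 := ne_of_gt (hwpos u)
        have hwv : w v ≠ 0 := ne_of_gt (hwpos v)
        field_simp
        ring
    rw [e1, Finset.sum_sub_distrib, Finset.sum_ite_eq univ v w, if_pos (Finset.mem_univ v),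
      ← Finset.sum_div, hrow]
    have hwv : w v ≠ 0 := ne_of_gt (hwpos v)
    have : w v - d v / w v = 0 := by
      rw [← hw2 v]
      field_simp
      ring
    simpa using this
  -- positive semidefinite
  have hpsd : ∀ x : Fin n → ℝ, 0 ≤ x ⬝ᵥ (nL *ᵥ x) := by
    intro x
    rw [quadform x]
    have h1 : 0 ≤ ∑ u, ∑ v, a u v * (x u / w u - x v / w v)^2 :=
      Finset.sum_nonneg fun u _ => Finset.sum_nonneg fun v _ =>
        mul_nonneg (hann u v) (sq_nonneg _)
    linarith
  -- kernel is spanned by w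
  have hker : ∀ x : Fin n → ℝ, nL *ᵥ x = 0 → ∃ c : ℝ, x = c • w := by
    intro x hx
    have h0 : (1/2) * ∑ u, ∑ v, a u v * (x u / w u - x v / w v)^2 = 0 := by
      rw [← quadform x, hx]
      simp
    have hsum0 : ∑ u, ∑ v, a u v * (x u / w u - x v / w v)^2 = 0 := by linarith
    have hterm0 : ∀ u v, a u v * (x u / w u - x v / w v)^2 = 0 := by
      intro u v
      have h1 := (Finset.sum_eq_zero_iff_of_nonneg (fun u _ => Finset.sum_nonneg fun v _ =>
        mul_nonneg (hann u v) (sq_nonneg _))).mp hsum0 u (Finset.mem_univ u)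
      exact (Finset.sum_eq_zero_iff_of_nonneg (fun v _ =>
        mul_nonneg (hann u v) (sq_nonneg _))).mp h1 v (Finset.mem_univ v)
    have hadj_eq : ∀ u v, G.Adj u v → x u / w u = x v / w v := by
      intro u v hadj
      have h1 := hterm0 u v
      rw [show a u v = 1 by simp [ha, hadj], one_mul] at h1
      have h2 : x u / w u - x v / w v = 0 := by
        exact pow_eq_zero_iff (n := 2) (by norm_num) |>.mp h1
      linarith
    have hreach : ∀ u v : Fin n, G.Reachable u v → x u / w u = x v / w v := by
      intro u v hr
      obtain ⟨p⟩ := hr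
      induction p with
      | nil => rfl
      | cons hadjuv _ ih => exact (hadj_eq _ _ hadjuv).trans ih
    refine ⟨x ⟨0, hn0⟩ / w ⟨0, hn0⟩, ?_⟩
    funext v
    have h3 := hreach v ⟨0, hn0⟩ (hconn.preconnected v ⟨0, hn0⟩)
    have hwv : w v ≠ 0 := ne_of_gt (hwpos v)
    show x v = (x ⟨0, hn0⟩ / w ⟨0, hn0⟩) * w v
    rw [← h3]
    field_simp
  obtain ⟨hlam0, hray, f, hfne, hfeig, hfw⟩ :=
    rayleigh_facts hn nL hsym hpsd w hwne hLw hker lam hlam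
  -- conductance set
  set Φ : Set ℝ := {x : ℝ | ∃ S : Finset (Fin n), S.Nonempty ∧
      (∑ v ∈ S, d v) ≤ (∑ v : Fin n, d v) / 2 ∧
      x = (∑ u ∈ S, ∑ v ∈ Sᶜ, a u v) / (∑ v ∈ S, d v)} with hΦdef
  have hφΦ : φ = sInf Φ := hφ
  have hvolpos : ∀ S : Finset (Fin n), S.Nonempty → 0 < ∑ v ∈ S, d v :=
    fun S hS => Finset.sum_pos (fun v _ => hdpos v) hS
  have hcutnn : ∀ S : Finset (Fin n), 0 ≤ ∑ u ∈ S, ∑ v ∈ Sᶜ, a u v :=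
    fun S => Finset.sum_nonneg fun u _ => Finset.sum_nonneg fun v _ => hann u v
  have hΦlb : ∀ X ∈ Φ, (0:ℝ) ≤ X := by
    rintro X ⟨S, hSne, -, rfl⟩
    exact div_nonneg (hcutnn S) (le_of_lt (hvolpos S hSne))
  have hbdd : BddBelow Φ := ⟨0, fun X hX => hΦlb X hX⟩
  have hφnn : 0 ≤ φ := by
    rw [hφΦ]
    exact Real.sInf_nonneg hΦlb
  have hmem_le : ∀ S : Finset (Fin n), S.Nonempty → (∑ v ∈ S, d v) ≤ (∑ v, d v)/2 →
      φ * (∑ v ∈ S, d v) ≤ ∑ u ∈ S, ∑ v ∈ Sᶜ, a u v := by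
    intro S h1 h2
    have hX : (∑ u ∈ S, ∑ v ∈ Sᶜ, a u v) / (∑ v ∈ S, d v) ∈ Φ := ⟨S, h1, h2, rfl⟩
    have h3 := csInf_le hbdd hX
    rw [← hφΦ] at h3
    have h4 := hvolpos S h1
    calc φ * (∑ v ∈ S, d v)
        ≤ ((∑ u ∈ S, ∑ v ∈ Sᶜ, a u v) / (∑ v ∈ S, d v)) * (∑ v ∈ S, d v) :=
          mul_le_mul_of_nonneg_right h3 (le_of_lt h4)
      _ = ∑ u ∈ S, ∑ v ∈ Sᶜ, a u v := div_mul_cancel₀ _ (ne_of_gt h4)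
  have hΦne : Φ.Nonempty := by
    obtain ⟨v₀, -, hv₀⟩ := Finset.exists_min_image univ d ⟨⟨0, hn0⟩, Finset.mem_univ _⟩
    set v₁ : Fin n := if v₀ = ⟨0, hn0⟩ then ⟨1, hn⟩ else ⟨0, hn0⟩ with hv₁def
    have hne10 : v₀ ≠ v₁ := by
      rw [hv₁def]
      split
      · next h =>
          rw [h]
          intro hc
          have h9 := congrArg Fin.val hc
          simp at h9
      · next h => exact h
    have hpair : d v₀ + d v₁ ≤ ∑ v, d v := by
      have h5 : ∑ v ∈ ({v₀, v₁} : Finset (Fin n)), d v ≤ ∑ v, d v :=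
        Finset.sum_le_sum_of_subset_of_nonneg (Finset.subset_univ _)
          (fun v _ _ => le_of_lt (hdpos v))
      rwa [Finset.sum_pair hne10] at h5
    have hhalf : ∑ v ∈ ({v₀} : Finset (Fin n)), d v ≤ (∑ v, d v) / 2 := by
      rw [Finset.sum_singleton]
      have h6 := hv₀ v₁ (Finset.mem_univ v₁)
      linarith
    exact ⟨_, {v₀}, Finset.singleton_nonempty v₀, hhalf, rfl⟩
  -- easy direction
  have easy : lam / 2 ≤ φ := by
    rw [hφΦ]
    apply le_csInf hΦne
    rintro X ⟨S, hSne, hSvol, rfl⟩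
    have hvolS : 0 < ∑ v ∈ S, d v := hvolpos S hSne
    have htot : (∑ v ∈ S, d v) + (∑ v ∈ Sᶜ, d v) = ∑ v, d v := Finset.sum_add_sum_compl S d
    have hvolC : (∑ v ∈ S, d v) ≤ ∑ v ∈ Sᶜ, d v := by linarith
    have hvolCpos : 0 < ∑ v ∈ Sᶜ, d v := lt_of_lt_of_le hvolS hvolC
    set α : ℝ := 1 / (∑ v ∈ S, d v) with hα
    set β : ℝ := 1 / (∑ v ∈ Sᶜ, d v) with hβ
    have hαpos : 0 < α := by rw [hα]; positivity
    have hβpos : 0 < β := by rw [hβ]; positivity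
    set y : Fin n → ℝ := fun v => if v ∈ S then α else -β with hy
    set x : Fin n → ℝ := fun v => w v * y v with hxdef
    have hxw : ∀ v, x v / w v = y v := by
      intro v
      rw [hxdef]
      exact mul_div_cancel_left₀ _ (ne_of_gt (hwpos v))
    have hsq : ∀ v, w v * x v = d v * y v := by
      intro v
      rw [hxdef, ← mul_assoc, ← pow_two, hw2]
    have hdot0 : w ⬝ᵥ x = 0 := by
      calc w ⬝ᵥ x = ∑ v, d v * y v := Finset.sum_congr rfl (fun v _ => hsq v)
        _ = (∑ v ∈ S, d v * y v) + ∑ v ∈ Sᶜ, d v * y v := (Finset.sum_add_sum_compl S _).symm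
        _ = α * (∑ v ∈ S, d v) + (-β) * (∑ v ∈ Sᶜ, d v) := by
            rw [Finset.mul_sum, Finset.mul_sum]
            congr 1
            · exact Finset.sum_congr rfl (fun v hv => by rw [hy]; simp [hv]; ring)
            · exact Finset.sum_congr rfl (fun v hv => by
                rw [hy]
                simp only [Finset.mem_compl] at hv
                simp [hv]
                ring)
        _ = 0 := by
            rw [hα, hβ]
            field_simp
            ring
    have hxx : x ⬝ᵥ x = α + β := by
      calc x ⬝ᵥ x = ∑ v, d v * y v ^ 2 := by
            apply Finset.sum_congr rfl
            intro v _
            rw [hxdef, ← hw2]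
            ring
        _ = (∑ v ∈ S, d v * y v ^ 2) + ∑ v ∈ Sᶜ, d v * y v ^ 2 :=
            (Finset.sum_add_sum_compl S _).symm
        _ = α^2 * (∑ v ∈ S, d v) + β^2 * (∑ v ∈ Sᶜ, d v) := by
            rw [Finset.mul_sum, Finset.mul_sum]
            congr 1
            · exact Finset.sum_congr rfl (fun v hv => by rw [hy]; simp [hv]; ring)
            · exact Finset.sum_congr rfl (fun v hv => by
                rw [hy]
                simp only [Finset.mem_compl] at hv
                simp [hv]
                ring)
        _ = α + β := by
            rw [hα, hβ]
            field_simp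
    have hform : x ⬝ᵥ (nL *ᵥ x) = (∑ u ∈ S, ∑ v ∈ Sᶜ, a u v) * (α + β)^2 := by
      rw [quadform x]
      have e : ∀ u v, a u v * (x u / w u - x v / w v)^2
          = (α + β)^2 * (a u v * ((if u ∈ S ∧ v ∉ S then (1:ℝ) else 0)
            + (if v ∈ S ∧ u ∉ S then (1:ℝ) else 0))) := by
        intro u v
        rw [hxw, hxw, hy]
        by_cases hu : u ∈ S <;> by_cases hv : v ∈ S
        · rw [if_neg (fun hc => hc.2 hv), if_neg (fun hc => hc.2 hu)]
          simp only [if_pos hu, if_pos hv]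
          ring
        · rw [if_pos ⟨hu, hv⟩, if_neg (fun hc => hv hc.1)]
          simp only [if_pos hu, if_neg hv]
          ring
        · rw [if_neg (fun hc => hu hc.1), if_pos ⟨hv, hu⟩]
          simp only [if_neg hu, if_pos hv]
          ring
        · rw [if_neg (fun hc => hu hc.1), if_neg (fun hc => hv hc.1)]
          simp only [if_neg hu, if_neg hv]
          ring
      rw [Finset.sum_congr rfl (fun u _ => Finset.sum_congr rfl (fun v _ => e u v))]
      simp only [← Finset.mul_sum]
      have split2 : ∑ u, ∑ v, a u v * ((if u ∈ S ∧ v ∉ S then (1:ℝ) else 0)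
          + (if v ∈ S ∧ u ∉ S then (1:ℝ) else 0))
          = 2 * ∑ u ∈ S, ∑ v ∈ Sᶜ, a u v := by
        have e2 : ∀ u v, a u v * ((if u ∈ S ∧ v ∉ S then (1:ℝ) else 0)
            + (if v ∈ S ∧ u ∉ S then (1:ℝ) else 0))
            = a u v * (if u ∈ S ∧ v ∉ S then (1:ℝ) else 0)
              + a u v * (if v ∈ S ∧ u ∉ S then (1:ℝ) else 0) := fun u v => by ring
        rw [Finset.sum_congr rfl (fun u _ => Finset.sum_congr rfl (fun v _ => e2 u v))]
        simp only [Finset.sum_add_distrib]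
        rw [cut_expand a S]
        have e3 : ∑ u, ∑ v, a u v * (if v ∈ S ∧ u ∉ S then (1:ℝ) else 0)
            = ∑ u ∈ S, ∑ v ∈ Sᶜ, a u v := by
          rw [Finset.sum_comm]
          rw [Finset.sum_congr rfl (fun u _ => Finset.sum_congr rfl
            (fun v _ => by rw [hasymm v u]))]
          exact cut_expand a S
        rw [e3]
        ring
      rw [split2]
      ring
    have hr := hray x hdot0
    rw [hxx, hform] at hr
    have hαβ : 0 < α + β := by positivity
    have h1 : lam ≤ (∑ u ∈ S, ∑ v ∈ Sᶜ, a u v) * (α + β) := by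
      have h5 := mul_le_mul_of_nonneg_right hr (le_of_lt (inv_pos.mpr hαβ))
      rw [mul_assoc, mul_inv_cancel₀ (ne_of_gt hαβ), mul_one] at h5
      calc lam ≤ (∑ u ∈ S, ∑ v ∈ Sᶜ, a u v) * (α + β)^2 * (α + β)⁻¹ := h5
        _ = (∑ u ∈ S, ∑ v ∈ Sᶜ, a u v) * ((α + β) * ((α + β) * (α + β)⁻¹)) := by ring
        _ = (∑ u ∈ S, ∑ v ∈ Sᶜ, a u v) * (α + β) := by
            rw [mul_inv_cancel₀ (ne_of_gt hαβ), mul_one]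
    have hβα : β ≤ α := by
      rw [hα, hβ]
      exact one_div_le_one_div_of_le hvolS hvolC
    have h2 : (∑ u ∈ S, ∑ v ∈ Sᶜ, a u v) * (α + β)
        ≤ (∑ u ∈ S, ∑ v ∈ Sᶜ, a u v) * (2 * α) :=
      mul_le_mul_of_nonneg_left (by linarith) (hcutnn S)
    have h3 : (∑ u ∈ S, ∑ v ∈ Sᶜ, a u v) * (2 * α)
        = 2 * ((∑ u ∈ S, ∑ v ∈ Sᶜ, a u v) / (∑ v ∈ S, d v)) := by
      rw [hα]
      field_simp
    show lam / 2 ≤ (∑ u ∈ S, ∑ v ∈ Sᶜ, a u v) / (∑ v ∈ S, d v)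
    linarith
  -- ==================== hard direction ====================
  set g : Fin n → ℝ := fun v => f v / w v with hg
  have hfg : ∀ v, f v = g v * w v := by
    intro v
    rw [hg, div_mul_cancel₀ _ (ne_of_gt (hwpos v))]
  have hgeig : ∀ v, d v * g v - ∑ u, a v u * g u = lam * (d v * g v) := by
    intro v
    have h1 := congrFun hfeig v
    have h2 : (nL *ᵥ f) v = f v - (∑ u, a v u * g u) / w v := by
      have e1 : (nL *ᵥ f) v = ∑ u, ((if v = u then f u else 0) - (a v u * g u) / w v) := by
        simp only [Matrix.mulVec, dotProduct]
        apply Finset.sum_congr rfl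
        intro u _
        rw [hentry]
        by_cases hvu : v = u
        · rw [if_pos hvu, if_pos hvu]
          subst hvu
          rw [haa]
          ring
        · rw [if_neg hvu, if_neg hvu]
          have hwu : w u ≠ 0 := ne_of_gt (hwpos u)
          have hwv : w v ≠ 0 := ne_of_gt (hwpos v)
          rw [hg]
          field_simp
          try ring
          try tauto
      rw [e1, Finset.sum_sub_distrib, Finset.sum_ite_eq univ v f, if_pos (Finset.mem_univ v),
        ← Finset.sum_div]
    rw [h2] at h1
    have h3 : (lam • f) v = lam * f v := rfl
    rw [h3] at h1
    have hwv : w v ≠ 0 := ne_of_gt (hwpos v)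
    have h4 := congrArg (fun z => z * w v) h1
    rw [sub_mul, div_mul_cancel₀ _ hwv] at h4
    have h5 : f v * w v = d v * g v := by
      rw [hfg v, ← hw2]
      ring
    have h6 : lam * f v * w v = lam * (d v * g v) := by
      rw [mul_assoc, h5]
    linarith
  have hsumdg : ∑ v, d v * g v = 0 := by
    have e1 : w ⬝ᵥ f = ∑ v, d v * g v :=
      Finset.sum_congr rfl (fun v _ => by rw [hfg v, ← hw2]; ring)
    rw [e1] at hfw
    exact hfw
  have hgne : g ≠ 0 := by
    intro hc
    apply hfne
    funext v
    rw [hfg v, congrFun hc v]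
    simp
  have hside : ∀ g' : Fin n → ℝ, (∑ v, d v * g' v = 0) → g' ≠ 0 →
      (univ.filter (fun v => 0 < g' v)).Nonempty := by
    intro g' hsum hne
    by_contra hc
    rw [Finset.not_nonempty_iff_eq_empty, Finset.filter_eq_empty_iff] at hc
    have hnn : ∀ v ∈ (univ : Finset (Fin n)), 0 ≤ d v * (- g' v) := by
      intro v _
      have h1 := hc (Finset.mem_univ v)
      push_neg at h1
      exact mul_nonneg (hdpos v).le (neg_nonneg.mpr h1)
    have hz : ∑ v, d v * (- g' v) = 0 := by
      have : ∑ v, d v * (- g' v) = - ∑ v, d v * g' v := by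
        rw [← Finset.sum_neg_distrib]
        exact Finset.sum_congr rfl (fun v _ => by ring)
      rw [this, hsum, neg_zero]
    apply hne
    funext v
    have h7 := (Finset.sum_eq_zero_iff_of_nonneg hnn).mp hz v (Finset.mem_univ v)
    have h8 := (hdpos v).ne'
    rcases mul_eq_zero.mp h7 with h9 | h9
    · exact absurd h9 h8
    · have : g' v = 0 := by linarith
      simpa using this
  have main : ∀ g' : Fin n → ℝ,
      (∀ v, d v * g' v - ∑ u, a v u * g' u = lam * (d v * g' v)) →
      (univ.filter (fun v => 0 < g' v)).Nonempty →
      (∃ v, g' v ≤ 0) →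
      ((∑ v ∈ univ.filter (fun v => 0 < g' v), d v) ≤ (∑ v, d v) / 2) →
      φ^2 ≤ 2*lam := by
    intro g' heig hPne hex hvol
    set h : Fin n → ℝ := fun v => max (g' v) 0 with hhdef
    have hhnn : ∀ v, 0 ≤ h v := fun v => le_max_right _ _
    have hzero : ∃ v, h v = 0 := by
      obtain ⟨v, hv⟩ := hex
      exact ⟨v, max_eq_right hv⟩
    have hpos_iff : ∀ v, 0 < h v ↔ 0 < g' v := by
      intro v
      constructor
      · intro hv
        by_contra hc
        push_neg at hc
        rw [show h v = 0 from max_eq_right hc] at hv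
        exact lt_irrefl 0 hv
      · intro hv
        exact lt_of_lt_of_le hv (le_max_left _ _)
    have hgh : ∀ v, g' v ≤ h v := fun v => le_max_left _ _
    have hhg : ∀ v, h v * g' v = h v * h v := by
      intro v
      rcases le_or_gt (g' v) 0 with hv | hv
      · rw [show h v = 0 from max_eq_right hv]
        ring
      · rw [show h v = g' v from max_eq_left hv.le]
    have hSweepHyp : ∀ S : Finset (Fin n), S.Nonempty → (∀ v ∈ S, 0 < h v) →
        φ * (∑ v ∈ S, d v) ≤ ∑ u ∈ S, ∑ v ∈ Sᶜ, a u v := by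
      intro S hSne hSpos
      apply hmem_le S hSne
      have hsub : S ⊆ univ.filter (fun v => 0 < g' v) := by
        intro v hv
        rw [Finset.mem_filter]
        exact ⟨Finset.mem_univ v, (hpos_iff v).mp (hSpos v hv)⟩
      calc ∑ v ∈ S, d v ≤ ∑ v ∈ univ.filter (fun v => 0 < g' v), d v :=
            Finset.sum_le_sum_of_subset_of_nonneg hsub (fun v _ _ => (hdpos v).le)
        _ ≤ (∑ v, d v)/2 := hvol
    set M : ℝ := ∑ v, d v * h v ^ 2 with hM
    have hMpos : 0 < M := by
      obtain ⟨v, hv⟩ := hPne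
      rw [Finset.mem_filter] at hv
      rw [hM]
      apply Finset.sum_pos' (fun u _ => mul_nonneg (hdpos u).le (sq_nonneg _))
      exact ⟨v, Finset.mem_univ v, mul_pos (hdpos v) (pow_pos ((hpos_iff v).mpr hv.2) 2)⟩
    set Q : ℝ := (1/2) * ∑ u, ∑ v, a u v * (h u - h v)^2 with hQ
    have claimA : Q ≤ lam * M := by
      have e1 : lam * M = ∑ v, h v * (lam * (d v * g' v)) := by
        rw [hM, Finset.mul_sum]
        apply Finset.sum_congr rfl
        intro v _
        rcases le_or_gt (g' v) 0 with hv | hv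
        · rw [show h v = 0 from max_eq_right hv]
          ring
        · rw [show h v = g' v from max_eq_left hv.le]
          ring
      have e2 : ∑ v, h v * (lam * (d v * g' v))
          = ∑ v, (d v * (h v * h v) - ∑ u, a v u * (h v * g' u)) := by
        apply Finset.sum_congr rfl
        intro v _
        rw [← heig v, mul_sub]
        congr 1
        · calc h v * (d v * g' v) = d v * (h v * g' v) := by ring
            _ = d v * (h v * h v) := by rw [hhg v]
        · rw [Finset.mul_sum]
          apply Finset.sum_congr rfl
          intro u _
          ring
      have e4 : ∑ v, (d v * (h v * h v) - ∑ u, a v u * (h v * h u))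
          ≤ ∑ v, (d v * (h v * h v) - ∑ u, a v u * (h v * g' u)) := by
        apply Finset.sum_le_sum
        intro v _
        apply sub_le_sub_left
        apply Finset.sum_le_sum
        intro u _
        exact mul_le_mul_of_nonneg_left
          (mul_le_mul_of_nonneg_left (hgh u) (hhnn v)) (hann v u)
      have e5 : Q = ∑ v, (d v * (h v * h v) - ∑ u, a v u * (h v * h u)) := by
        have ex : ∀ u v, a u v * (h u - h v)^2
            = a u v * (h u * h u) + a u v * (h v * h v) - 2 * (a u v * (h u * h v)) := by
          intro u v
          ring
        rw [hQ, Finset.sum_congr rfl (fun u _ => Finset.sum_congr rfl (fun v _ => ex u v))]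
        simp only [Finset.sum_add_distrib, Finset.sum_sub_distrib, ← Finset.mul_sum]
        have t1 : ∑ u, ∑ v, a u v * (h u * h u) = ∑ u, d u * (h u * h u) := by
          apply Finset.sum_congr rfl
          intro u _
          rw [← Finset.sum_mul, hrow]
        have t2 : ∑ u, ∑ v, a u v * (h v * h v) = ∑ v, d v * (h v * h v) := by
          rw [Finset.sum_comm]
          apply Finset.sum_congr rfl
          intro v _
          rw [← Finset.sum_mul, hcol]
        rw [t1, t2]
        ring
      calc Q = ∑ v, (d v * (h v * h v) - ∑ u, a v u * (h v * h u)) := e5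
        _ ≤ ∑ v, (d v * (h v * h v) - ∑ u, a v u * (h v * g' u)) := e4
        _ = lam * M := (e1.trans e2).symm
    have claimB : φ * M ≤ (1/2) * ∑ u, ∑ v, a u v * |h u ^ 2 - h v ^ 2| :=
      cheeger_sweep d a hasymm h hhnn hzero φ hSweepHyp
    set C : ℝ := (1/2) * ∑ u, ∑ v, a u v * |h u ^ 2 - h v ^ 2| with hC
    have hQnn : 0 ≤ Q := by
      rw [hQ]
      have h1 : 0 ≤ ∑ u, ∑ v, a u v * (h u - h v)^2 :=
        Finset.sum_nonneg fun u _ => Finset.sum_nonneg fun v _ =>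
          mul_nonneg (hann u v) (sq_nonneg _)
      linarith
    have claimC : C^2 ≤ Q * (2 * M) := by
      have hCS := Finset.sum_mul_sq_le_sq_mul_sq (univ : Finset (Fin n × Fin n))
        (fun p => Real.sqrt (a p.1 p.2) * |h p.1 - h p.2|)
        (fun p => Real.sqrt (a p.1 p.2) * (h p.1 + h p.2))
      have eFG : ∑ p : Fin n × Fin n, (Real.sqrt (a p.1 p.2) * |h p.1 - h p.2|)
          * (Real.sqrt (a p.1 p.2) * (h p.1 + h p.2)) = 2 * C := by
        rw [Fintype.sum_prod_type]
        have e1 : ∀ u v : Fin n, (Real.sqrt (a u v) * |h u - h v|)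
            * (Real.sqrt (a u v) * (h u + h v)) = a u v * |h u ^ 2 - h v ^ 2| := by
          intro u v
          have e2 : Real.sqrt (a u v) * Real.sqrt (a u v) = a u v :=
            Real.mul_self_sqrt (hann u v)
          have e3 : |h u - h v| * (h u + h v) = |h u ^ 2 - h v ^ 2| := by
            rw [show h u ^ 2 - h v ^ 2 = (h u - h v) * (h u + h v) by ring, abs_mul,
              abs_of_nonneg (add_nonneg (hhnn u) (hhnn v))]
          calc (Real.sqrt (a u v) * |h u - h v|) * (Real.sqrt (a u v) * (h u + h v))
              = (Real.sqrt (a u v) * Real.sqrt (a u v)) * (|h u - h v| * (h u + h v)) := by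
                ring
            _ = a u v * |h u ^ 2 - h v ^ 2| := by rw [e2, e3]
        rw [Finset.sum_congr rfl (fun u _ => Finset.sum_congr rfl (fun v _ => e1 u v)), hC]
        ring
      have eF2 : ∑ p : Fin n × Fin n, (Real.sqrt (a p.1 p.2) * |h p.1 - h p.2|)^2 = 2 * Q := by
        rw [Fintype.sum_prod_type]
        have e1 : ∀ u v : Fin n, (Real.sqrt (a u v) * |h u - h v|)^2
            = a u v * (h u - h v)^2 := by
          intro u v
          rw [mul_pow, Real.sq_sqrt (hann u v), sq_abs]
        rw [Finset.sum_congr rfl (fun u _ => Finset.sum_congr rfl (fun v _ => e1 u v)), hQ]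
        ring
      have eG2 : ∑ p : Fin n × Fin n, (Real.sqrt (a p.1 p.2) * (h p.1 + h p.2))^2
          ≤ 2 * (2 * M) := by
        have e1 : ∀ u v : Fin n, (Real.sqrt (a u v) * (h u + h v))^2
            ≤ 2 * (a u v * (h u * h u)) + 2 * (a u v * (h v * h v)) := by
          intro u v
          rw [mul_pow, Real.sq_sqrt (hann u v)]
          exact sq_sum_aux (a u v) (h u) (h v) (hann u v)
        calc ∑ p : Fin n × Fin n, (Real.sqrt (a p.1 p.2) * (h p.1 + h p.2))^2
            ≤ ∑ p : Fin n × Fin n, (2 * (a p.1 p.2 * (h p.1 * h p.1))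
                + 2 * (a p.1 p.2 * (h p.2 * h p.2))) :=
              Finset.sum_le_sum (fun p _ => e1 p.1 p.2)
          _ = 2 * (∑ u, ∑ v, a u v * (h u * h u)) + 2 * (∑ u, ∑ v, a u v * (h v * h v)) := by
              rw [Fintype.sum_prod_type]
              simp only [Finset.sum_add_distrib, ← Finset.mul_sum]
          _ = 2 * (2 * M) := by
              have t1 : ∑ u, ∑ v, a u v * (h u * h u) = ∑ u, d u * (h u * h u) := by
                apply Finset.sum_congr rfl
                intro u _
                rw [← Finset.sum_mul, hrow]
              have t2 : ∑ u, ∑ v, a u v * (h v * h v) = ∑ v, d v * (h v * h v) := by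
                rw [Finset.sum_comm]
                apply Finset.sum_congr rfl
                intro v _
                rw [← Finset.sum_mul, hcol]
              have t3 : ∑ v, d v * (h v * h v) = M := by
                rw [hM]
                exact Finset.sum_congr rfl (fun v _ => by ring)
              rw [t1, t2, t3]
              ring
      have h2C : (2 * C)^2 ≤ (2 * Q) * (2 * (2 * M)) := by
        rw [← eFG]
        calc (∑ p : Fin n × Fin n, (Real.sqrt (a p.1 p.2) * |h p.1 - h p.2|)
            * (Real.sqrt (a p.1 p.2) * (h p.1 + h p.2)))^2
            ≤ (∑ p : Fin n × Fin n, (Real.sqrt (a p.1 p.2) * |h p.1 - h p.2|)^2)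
              * ∑ p : Fin n × Fin n, (Real.sqrt (a p.1 p.2) * (h p.1 + h p.2))^2 := hCS
          _ ≤ (2 * Q) * (2 * (2 * M)) := by
              apply mul_le_mul
              · rw [eF2]
              · exact eG2
              · exact Finset.sum_nonneg fun p _ => sq_nonneg _
              · linarith
      have e6 : (2 * C)^2 = 4 * C^2 := by ring
      have e7 : (2 * Q) * (2 * (2 * M)) = 8 * (Q * M) := by ring
      rw [e6, e7] at h2C
      have e8 : Q * (2 * M) = 2 * (Q * M) := by ring
      linarith
    have h1 : 0 ≤ φ * M := mul_nonneg hφnn hMpos.le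
    have h3 : C^2 ≤ (lam * M) * (2 * M) :=
      le_trans claimC (mul_le_mul_of_nonneg_right claimA (by linarith))
    have h4 : φ^2 * M^2 ≤ (2 * lam) * M^2 := by
      calc φ^2 * M^2 = (φ * M) * (φ * M) := by ring
        _ ≤ C * C := mul_self_le_mul_self h1 claimB
        _ = C^2 := by ring
        _ ≤ (lam * M) * (2 * M) := h3
        _ = (2 * lam) * M^2 := by ring
    exact le_of_mul_le_mul_right h4 (pow_pos hMpos 2)
  -- apply main to g or -g
  have hPne := hside g hsumdg hgne
  have hNsum : ∑ v, d v * (-g) v = 0 := by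
    have : ∑ v, d v * (-g) v = - ∑ v, d v * g v := by
      rw [← Finset.sum_neg_distrib]
      exact Finset.sum_congr rfl (fun v _ => by simp)
    rw [this, hsumdg, neg_zero]
  have hNgne : (-g : Fin n → ℝ) ≠ 0 := by
    intro hc
    apply hgne
    funext v
    have := congrFun hc v
    simp at this
    simpa using this
  have hNne := hside (-g) hNsum hNgne
  have hgex : ∃ v, g v ≤ 0 := by
    obtain ⟨v, hv⟩ := hNne
    rw [Finset.mem_filter] at hv
    have : 0 < -g v := by simpa using hv.2
    exact ⟨v, by linarith⟩
  have hngex : ∃ v, (-g : Fin n → ℝ) v ≤ 0 := by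
    obtain ⟨v, hv⟩ := hPne
    rw [Finset.mem_filter] at hv
    exact ⟨v, by simp; linarith [hv.2]⟩
  have hNeig : ∀ v, d v * (-g) v - ∑ u, a v u * (-g) u = lam * (d v * (-g) v) := by
    intro v
    have h1 := hgeig v
    have h2 : ∑ u, a v u * (-g) u = - ∑ u, a v u * g u := by
      rw [← Finset.sum_neg_distrib]
      exact Finset.sum_congr rfl (fun u _ => by simp)
    rw [h2]
    simp only [Pi.neg_apply]
    ring_nf
    ring_nf at h1
    linarith
  have hdisj : Disjoint (univ.filter (fun v => 0 < g v))
      (univ.filter (fun v => 0 < (-g : Fin n → ℝ) v)) := by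
    rw [Finset.disjoint_filter]
    intro v _ hv
    simp only [Pi.neg_apply]
    linarith
  have hvolsum : (∑ v ∈ univ.filter (fun v => 0 < g v), d v)
      + (∑ v ∈ univ.filter (fun v => 0 < (-g : Fin n → ℝ) v), d v) ≤ ∑ v, d v := by
    rw [← Finset.sum_union hdisj]
    exact Finset.sum_le_sum_of_subset_of_nonneg (Finset.subset_univ _)
      (fun v _ _ => (hdpos v).le)
  have hhard : φ^2 ≤ 2*lam := by
    by_cases hcase : (∑ v ∈ univ.filter (fun v => 0 < g v), d v) ≤ (∑ v, d v) / 2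
    · exact main g hgeig hPne hgex hcase
    · apply main (-g) hNeig hNne hngex
      push_neg at hcase
      linarith
  constructor
  · linarith
  · linarith
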